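/- Let H = { x = E_1 E_2 E_3 ... : for each k ≥ 1, E_k ∈ {I_{2^k} A_{2^k}, O_{2^k} A_{2^k} I_{2^k} A_{2^k}} }, where A_n, O_n, I_n are the words from the construction A_1 = 10111, A_{n+1} = A_n O_n A_n I_n A_n. Then for every x ∈ H and every k ≥ 1, the finite prefix E_1 E_2 ... E_k is a suffix (tail) of the word A_{2^k + 1}; consequently H ⊆ ω(u, σ), where u = lim A_n. -/

import Mathlib

open Set Metric Filter TopologicalSpace

/-- The set of all `n`-fold compositions of members of `F = {f 0, …, f (m-1)}` applied to `x`. -/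
def iterSet {X : Type*} {m : ℕ} (f : Fin m → X → X) : ℕ → X → Set X
  | 0, x => {x}
  | n + 1, x => ⋃ i, iterSet f n (f i x)

/-- The words `A_n` over the alphabet `{0,1}` (`false = 0`, `true = 1`):
`A₁ = 10111` and `A_{n+1} = A_n O_n A_n I_n A_n`, where `O_n` (resp. `I_n`) is the constant-`0`
(resp. constant-`1`) word of the same length as `A_n`. (`Aword 0` is a dummy value.) -/
def Aword : ℕ → List Bool
  | 0 => []
  | 1 => [true, false, true, true, true]
  | n + 2 =>
      Aword (n + 1) ++ List.replicate (Aword (n + 1)).length false ++ Aword (n + 1)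
        ++ List.replicate (Aword (n + 1)).length true ++ Aword (n + 1)
def Sig2 : Type := ℕ → Bool

noncomputable def sdist (a b : Sig2) : ℝ :=
  ∑' i : ℕ, (if a i = b i then (0 : ℝ) else 1) / 2 ^ i

lemma sdist_term_nonneg (a b : Sig2) (i : ℕ) :
    0 ≤ (if a i = b i then (0 : ℝ) else 1) / 2 ^ i := by
  apply div_nonneg _ (by positivity)
  split <;> norm_num

lemma sdist_summable (a b : Sig2) :
    Summable fun i : ℕ => (if a i = b i then (0 : ℝ) else 1) / 2 ^ i := by
  refine Summable.of_nonneg_of_le (sdist_term_nonneg a b) (fun i => ?_)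
    summable_geometric_two
  rw [one_div, inv_pow, ← one_div]
  gcongr
  split <;> norm_num

noncomputable instance : MetricSpace Sig2 where
  dist := sdist
  dist_self a := by
    unfold sdist; simp
  dist_comm a b := by
    refine tsum_congr fun i => ?_
    by_cases h : a i = b i
    · rw [if_pos h, if_pos h.symm]
    · rw [if_neg h, if_neg fun h' => h h'.symm]
  dist_triangle a b c := by
    have key : ∀ i : ℕ, (if a i = c i then (0 : ℝ) else 1) / 2 ^ i ≤
        (if a i = b i then (0 : ℝ) else 1) / 2 ^ i
          + (if b i = c i then (0 : ℝ) else 1) / 2 ^ i := by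
      intro i
      by_cases hac : a i = c i
      · rw [if_pos hac, zero_div]
        exact add_nonneg (sdist_term_nonneg a b i) (sdist_term_nonneg b c i)
      · have h : ¬ a i = b i ∨ ¬ b i = c i := by
          by_contra hcon
          push_neg at hcon
          exact hac (hcon.1.trans hcon.2)
        rcases h with h | h
        · rw [if_neg hac, if_neg h]
          have := sdist_term_nonneg b c i
          linarith
        · rw [if_neg hac, if_neg h]
          have := sdist_term_nonneg a b i
          linarith
    calc sdist a c ≤ ∑' i : ℕ, ((if a i = b i then (0 : ℝ) else 1) / 2 ^ i
          + (if b i = c i then (0 : ℝ) else 1) / 2 ^ i) :=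
        (sdist_summable a c).tsum_le_tsum key ((sdist_summable a b).add (sdist_summable b c))
      _ = sdist a b + sdist b c := (sdist_summable a b).tsum_add (sdist_summable b c)
  eq_of_dist_eq_zero := by
    intro a b h
    funext i
    by_contra hne
    have hle := (sdist_summable a b).le_tsum i fun j _ => sdist_term_nonneg a b j
    rw [show (∑' i : ℕ, (if a i = b i then (0 : ℝ) else 1) / 2 ^ i) = 0 from h] at hle
    rw [if_neg hne] at hle
    have : (0 : ℝ) < 1 / 2 ^ i := by positivity
    exact absurd hle (not_le.mpr this)

/-- The shift map `σ` on `Σ₂`. -/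
def shiftS (x : Sig2) : Sig2 := fun n => x (n + 1)

/-- The ω-limit set of the point `u` under the shift `σ`. -/
def omegaLim (u : Sig2) : Set Sig2 :=
  ⋂ n : ℕ, closure {y : Sig2 | ∃ k : ℕ, n ≤ k ∧ y = shiftS^[k] u}

/-- The constant-`0` sequence `a = 000⋯`. -/
def aseq : Sig2 := fun _ => false

/-- The constant-`1` sequence `b = 111⋯`. -/
def bseq : Sig2 := fun _ => true

/-- The sequence `u` extending all the words `A_n`, viewed as a point of `Σ₂`. -/
def useqS : Sig2 := fun i => (Aword (i + 1)).getD i false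

/-- The multiple mapping `F = {σ, f₀}` where `f₀ ≡ a` is constant. -/
def Fsig : Fin 2 → Sig2 → Sig2 := ![shiftS, fun _ => aseq]

/-- The block `E_k`: either `I_{2^k} A_{2^k}` (choice `true`) or
`O_{2^k} A_{2^k} I_{2^k} A_{2^k}` (choice `false`). -/
def blockW (c : Bool) (k : ℕ) : List Bool :=
  if c then List.replicate (Aword (2 ^ k)).length true ++ Aword (2 ^ k)
  else List.replicate (Aword (2 ^ k)).length false ++ Aword (2 ^ k)
    ++ List.replicate (Aword (2 ^ k)).length true ++ Aword (2 ^ k)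

/-- The finite prefix `E_1 E_2 ⋯ E_k` determined by the choice sequence `c`. -/
def blocksPrefix (c : ℕ → Bool) (k : ℕ) : List Bool :=
  ((List.range k).map fun j => blockW (c (j + 1)) (j + 1)).flatten

/-- The element `x = E_1 E_2 E_3 ⋯` of `H` determined by the choice sequence `c`
(each block is nonempty, so position `i` lies inside `blocksPrefix c (i + 1)`). -/
def hseq (c : ℕ → Bool) : Sig2 := fun i => (blocksPrefix c (i + 1)).getD i false

/-! ### Auxiliary lemmas -/

lemma Aword_length (n : ℕ) : (Aword (n + 1)).length = 5 ^ (n + 1) := by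
  induction n with
  | zero => simp [Aword]
  | succ n ih =>
    show (Aword (n + 2)).length = 5 ^ (n + 2)
    simp only [Aword, List.length_append, List.length_replicate, ih]
    ring

lemma Aword_prefix (n : ℕ) : Aword n <+: Aword (n + 1) := by
  cases n with
  | zero => exact List.nil_prefix
  | succ n =>
    show Aword (n + 1) <+: Aword (n + 2)
    simp only [Aword]
    exact (List.prefix_append _ _).trans (List.prefix_append _ _) |>.trans
      ((List.prefix_append _ _).trans (List.prefix_append _ _))

lemma Aword_prefix_le {n m : ℕ} (h : n ≤ m) : Aword n <+: Aword m := by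
  induction m with
  | zero => simpa [Nat.le_zero.mp h] using List.prefix_refl _
  | succ m ih =>
    rcases Nat.lt_or_ge n (m + 1) with h' | h'
    · exact (ih (Nat.lt_succ_iff.mp h')).trans (Aword_prefix m)
    · have : n = m + 1 := le_antisymm h h'
      subst this; exact List.prefix_refl _

lemma Aword_suffix (n : ℕ) : Aword n <:+ Aword (n + 1) := by
  cases n with
  | zero => exact List.nil_suffix
  | succ n =>
    show Aword (n + 1) <:+ Aword (n + 2)
    simp only [Aword]
    exact List.suffix_append _ _

lemma Aword_suffix_le {n m : ℕ} (h : n ≤ m) : Aword n <:+ Aword m := by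
  induction m with
  | zero => simpa [Nat.le_zero.mp h] using List.suffix_refl _
  | succ m ih =>
    rcases Nat.lt_or_ge n (m + 1) with h' | h'
    · exact (ih (Nat.lt_succ_iff.mp h')).trans (Aword_suffix m)
    · have : n = m + 1 := le_antisymm h h'
      subst this; exact List.suffix_refl _

lemma blocksPrefix_succ (c : ℕ → Bool) (k : ℕ) :
    blocksPrefix c (k + 1) = blocksPrefix c k ++ blockW (c (k + 1)) (k + 1) := by
  simp [blocksPrefix, List.range_succ]

lemma blockW_length_pos (b : Bool) (k : ℕ) : 0 < (blockW b k).length := by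
  have h : 0 < (Aword (2 ^ k)).length := by
    have : 2 ^ k = (2 ^ k - 1) + 1 := by
      have := Nat.one_le_two_pow (n := k); omega
    rw [this, Aword_length]; positivity
  cases b <;> simp [blockW] <;> omega

lemma blocksPrefix_length_ge (c : ℕ → Bool) (k : ℕ) :
    k ≤ (blocksPrefix c k).length := by
  induction k with
  | zero => simp
  | succ k ih =>
    rw [blocksPrefix_succ, List.length_append]
    have := blockW_length_pos (c (k + 1)) (k + 1)
    omega

lemma blocksPrefix_prefix (c : ℕ → Bool) {k m : ℕ} (h : k ≤ m) :
    blocksPrefix c k <+: blocksPrefix c m := by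
  induction m with
  | zero => simpa [Nat.le_zero.mp h] using List.prefix_refl _
  | succ m ih =>
    rcases Nat.lt_or_ge k (m + 1) with h' | h'
    · exact (ih (Nat.lt_succ_iff.mp h')).trans
        (blocksPrefix_succ c m ▸ List.prefix_append _ _)
    · have : k = m + 1 := le_antisymm h h'
      subst this; exact List.prefix_refl _

lemma Aword_unfold (n : ℕ) (hn : 1 ≤ n) :
    Aword (n + 1) = Aword n ++ List.replicate (Aword n).length false ++ Aword n
      ++ List.replicate (Aword n).length true ++ Aword n := by
  cases n with
  | zero => omega
  | succ m => rfl

/-- The main suffix claim, by induction on `k`. -/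
lemma blocksPrefix_suffix (c : ℕ → Bool) :
    ∀ k : ℕ, 1 ≤ k → blocksPrefix c k <:+ Aword (2 ^ k + 1) := by
  intro k hk
  induction k with
  | zero => omega
  | succ k ih =>
    rcases Nat.eq_or_lt_of_le hk with h1 | h1
    · -- base case k + 1 = 1
      have hk0 : k = 0 := by omega
      subst hk0
      have hb : blocksPrefix c 1 = blockW (c 1) 1 := by
        simp [blocksPrefix, List.range_succ]
      rw [hb]
      show blockW (c 1) 1 <:+ Aword (2 ^ 1 + 1)
      have hA := Aword_unfold (2 ^ 1) Nat.one_le_two_pow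
      rw [hA]
      cases hc : c 1 with
      | true =>
        refine ⟨Aword (2 ^ 1) ++ List.replicate (Aword (2 ^ 1)).length false
          ++ Aword (2 ^ 1), ?_⟩
        simp only [blockW, if_true]
        simp [List.append_assoc]
      | false =>
        refine ⟨Aword (2 ^ 1), ?_⟩
        simp only [blockW, Bool.false_eq_true, if_false]
        simp [List.append_assoc]
    · -- inductive step, k ≥ 1
      have hk1 : 1 ≤ k := by omega
      have ht := ih (by omega)
      have hle : 2 ^ k + 1 ≤ 2 ^ (k + 1) := by
        have h2 : (2:ℕ) ≤ 2 ^ k := Nat.one_lt_two_pow_iff.mpr (by omega)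
        rw [pow_succ]; omega
      have htN : blocksPrefix c k <:+ Aword (2 ^ (k + 1)) :=
        ht.trans (Aword_suffix_le hle)
      rw [blocksPrefix_succ]
      rw [Aword_unfold (2 ^ (k + 1)) Nat.one_le_two_pow]
      obtain ⟨s, hs⟩ := htN
      cases hc : c (k + 1) with
      | true =>
        refine ⟨Aword (2 ^ (k + 1)) ++ List.replicate (Aword (2 ^ (k + 1))).length false
          ++ s, ?_⟩
        simp only [blockW, if_true]
        rw [← hs]
        simp [List.append_assoc]
      | false =>
        refine ⟨s, ?_⟩
        simp only [blockW, Bool.false_eq_true, if_false]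
        rw [← hs]
        simp [List.append_assoc]

lemma getD_of_prefix {s t : List Bool} (h : s <+: t) {i : ℕ} (hi : i < s.length) :
    s.getD i false = t.getD i false := by
  rw [List.getD_eq_getElem _ _ hi,
    List.getD_eq_getElem _ _ (lt_of_lt_of_le hi h.length_le)]
  exact h.getElem hi

lemma hseq_eq (c : ℕ → Bool) {m i : ℕ} (hi : i < (blocksPrefix c m).length) :
    hseq c i = (blocksPrefix c m).getD i false := by
  show (blocksPrefix c (i + 1)).getD i false = _
  have hi1 : i < (blocksPrefix c (i + 1)).length :=
    lt_of_lt_of_le (Nat.lt_succ_self i) (blocksPrefix_length_ge c (i + 1))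
  rcases le_total (i + 1) m with h | h
  · exact getD_of_prefix (blocksPrefix_prefix c h) hi1
  · exact (getD_of_prefix (blocksPrefix_prefix c h) hi).symm

lemma useqS_eq {M i : ℕ} (hi : i < (Aword M).length) :
    useqS i = (Aword M).getD i false := by
  show (Aword (i + 1)).getD i false = _
  have hi1 : i < (Aword (i + 1)).length := by
    rw [Aword_length]
    calc i < 2 ^ (i + 1) := (Nat.lt_two_pow_self).trans (Nat.pow_lt_pow_succ one_lt_two)
    _ ≤ 5 ^ (i + 1) := Nat.pow_le_pow_left (by norm_num) _
  rcases le_total (i + 1) M with h | h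
  · exact getD_of_prefix (Aword_prefix_le h) hi1
  · exact (getD_of_prefix (Aword_prefix_le h) hi).symm

lemma shiftS_iterate (p : ℕ) (x : Sig2) (n : ℕ) : (shiftS^[p] x) n = x (n + p) := by
  induction p generalizing n with
  | zero => rfl
  | succ p ih =>
    rw [Function.iterate_succ_apply']
    show (shiftS^[p] x) (n + 1) = x (n + (p + 1))
    rw [ih]
    congr 1
    omega

set_option maxHeartbeats 1000000 in
lemma dist_le_of_agree (a b : Sig2) (L : ℕ) (h : ∀ i < L, a i = b i) :
    dist a b ≤ 2 * (1 / 2 : ℝ) ^ L := by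
  have hd : dist a b = sdist a b := by simp only [dist]
  rw [hd]
  unfold sdist
  have hsum := sdist_summable a b
  rw [← Summable.sum_add_tsum_nat_add L hsum]
  have h1 : ∑ i ∈ Finset.range L, (if a i = b i then (0 : ℝ) else 1) / 2 ^ i = 0 := by
    apply Finset.sum_eq_zero
    intro i hi
    rw [if_pos (h i (Finset.mem_range.mp hi)), zero_div]
  rw [h1, zero_add]
  have h2 : ∑' i : ℕ, (if a (i + L) = b (i + L) then (0 : ℝ) else 1) / 2 ^ (i + L)
      ≤ ∑' i : ℕ, (1 / 2 : ℝ) ^ L * (1 / 2) ^ i := by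
    refine Summable.tsum_le_tsum ?_ ((summable_nat_add_iff L).mpr hsum)
      (Summable.mul_left _ summable_geometric_two)
    intro i
    rw [← pow_add]
    calc (if a (i + L) = b (i + L) then (0 : ℝ) else 1) / 2 ^ (i + L)
        ≤ 1 / 2 ^ (i + L) := by gcongr; split <;> norm_num
      _ = (1 / 2) ^ (L + i) := by rw [div_pow, one_pow, Nat.add_comm]
  calc _ ≤ _ := h2
    _ = (1 / 2 : ℝ) ^ L * 2 := by rw [tsum_mul_left, tsum_geometric_two]
    _ = 2 * (1 / 2 : ℝ) ^ L := by ring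

/-- For every choice sequence `c` (i.e. every `x ∈ H`) and every `k ≥ 1`, the finite prefix
`E_1 E_2 ⋯ E_k` is a suffix of the word `A_{2^k + 1}`; consequently every element of `H`
belongs to `ω(u, σ)`. -/
theorem H_prefixes_are_tails_and_H_subset_omegaLimit :
    ∀ c : ℕ → Bool,
      (∀ k : ℕ, 1 ≤ k → blocksPrefix c k <:+ Aword (2 ^ k + 1)) ∧
      hseq c ∈ omegaLim useqS := by
  intro c
  refine ⟨blocksPrefix_suffix c, ?_⟩
  rw [omegaLim, Set.mem_iInter]
  intro n
  rw [Metric.mem_closure_iff]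
  intro ε hε
  -- choose m ≥ 1 with 2 * (1/2)^m < ε
  obtain ⟨m0, hm0⟩ := exists_pow_lt_of_lt_one (half_pos hε) (by norm_num : (1/2 : ℝ) < 1)
  have hm1 : 1 ≤ max m0 1 := le_max_right _ _
  set m := max m0 1 with hm
  have hmlt : 2 * (1/2 : ℝ) ^ m < ε := by
    have hle : (1/2 : ℝ) ^ m ≤ (1/2) ^ m0 :=
      pow_le_pow_of_le_one (by norm_num) (by norm_num) (le_max_left _ _)
    calc 2 * (1/2 : ℝ) ^ m ≤ 2 * (1/2) ^ m0 := by linarith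
      _ < 2 * (ε/2) := by linarith
      _ = ε := by ring
  have hLm : m ≤ (blocksPrefix c m).length := blocksPrefix_length_ge c m
  set L := (blocksPrefix c m).length with hL
  set M := n + (2 ^ m + 1) with hM
  have hsuff : blocksPrefix c m <:+ Aword M :=
    (blocksPrefix_suffix c m hm1).trans (Aword_suffix_le (by omega))
  obtain ⟨s, hs⟩ := hsuff
  set p := s.length with hp
  have hMlen : (Aword M).length = 5 ^ M := by
    have hM1 : M = (n + 2 ^ m) + 1 := by omega
    rw [hM1, Aword_length, ← hM1]
  have hlen : p + L = 5 ^ M := by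
    rw [← hMlen, ← hs, List.length_append]
  have hLle : L ≤ 5 ^ (2 ^ m + 1) := by
    have hlle := (blocksPrefix_suffix c m hm1).length_le
    rwa [Aword_length (2 ^ m)] at hlle
  have hpn : n ≤ p := by
    have h5 : n < 5 ^ n := Nat.lt_pow_self (by norm_num)
    have hX : 1 ≤ 5 ^ (2 ^ m + 1) := Nat.one_le_pow _ _ (by norm_num)
    have key : n + L ≤ 5 ^ M := by
      calc n + L ≤ n * 5 ^ (2 ^ m + 1) + 5 ^ (2 ^ m + 1) :=
            add_le_add (Nat.le_mul_of_pos_right n (by omega)) hLle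
        _ = (n + 1) * 5 ^ (2 ^ m + 1) := by ring
        _ ≤ 5 ^ n * 5 ^ (2 ^ m + 1) := Nat.mul_le_mul_right _ (by omega)
        _ = 5 ^ M := by rw [← pow_add, ← hM]
    omega
  refine ⟨shiftS^[p] useqS, ⟨p, hpn, rfl⟩, ?_⟩
  have hagree : ∀ i < L, hseq c i = (shiftS^[p] useqS) i := by
    intro i hi
    rw [shiftS_iterate, hseq_eq c hi]
    have hiM : i + p < (Aword M).length := by omega
    rw [useqS_eq hiM, ← hs, List.getD_append_right _ _ _ _ (by omega)]
    congr 1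
    omega
  calc dist (hseq c) (shiftS^[p] useqS) ≤ 2 * (1/2 : ℝ) ^ L :=
      dist_le_of_agree _ _ L hagree
    _ ≤ 2 * (1/2 : ℝ) ^ m := by
        have := pow_le_pow_of_le_one (by norm_num : (0:ℝ) ≤ 1/2) (by norm_num) hLm
        linarith
    _ < ε := hmlt
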